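/- Let V be an irreducible uniformly bounded ℤ-graded 𝔅-module. Then there exists j ≥ 0 such that 𝔅_[j+1]·V = 0, where 𝔅_[m] = span{L(α,i) : α ∈ ℤ, i ≥ m}. -/

import Mathlib

/-- The Lie algebra `𝔅` of Block type: a complex Lie algebra `B` equipped with a basis
`{L α i : α ∈ ℤ, i ∈ ℕ} ∪ {C}` where `C` is central and
`[L α i, L β j] = ((i+1)β − (j+1)α)·L (α+β) (i+j) + δ_{α+β,0}·δ_{i+j,0}·((α³−α)/6)·C`. -/
structure BlockData (B : Type) [LieRing B] [LieAlgebra ℂ B] where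
  L : ℤ → ℕ → B
  C : B
  central : ∀ x : B, ⁅C, x⁆ = 0
  bracket_L : ∀ (α β : ℤ) (i j : ℕ),
    ⁅L α i, L β j⁆
      = (((i : ℂ) + 1) * (β : ℂ) - ((j : ℂ) + 1) * (α : ℂ)) • L (α + β) (i + j)
        + (if α + β = 0 ∧ i + j = 0 then ((α : ℂ) ^ 3 - (α : ℂ)) / 6 else 0) • C
  indep : LinearIndependent ℂ (Sum.elim (fun p : ℤ × ℕ => L p.1 p.2) (fun _ : Unit => C))
  span_top : Submodule.span ℂ
      (Set.range (Sum.elim (fun p : ℤ × ℕ => L p.1 p.2) (fun _ : Unit => C))) = ⊤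

variable {B : Type} [LieRing B] [LieAlgebra ℂ B]
variable {V : Type} [AddCommGroup V] [Module ℂ V] [LieRingModule B V] [LieModule ℂ B V]

/-- A `ℤ`-grading `V = ⊕ₖ Vₖ` on a `𝔅`-module, compatible with the grading of `𝔅`:
`𝔅^(α)·Vₖ ⊆ V_{α+k}` (where `𝔅^(α) = span{L α i : i ≥ 0} ⊕ δ_{α,0} ℂ C`). -/
structure GradedBMod (𝔟 : BlockData B) (V : Type) [AddCommGroup V] [Module ℂ V]
    [LieRingModule B V] [LieModule ℂ B V] where
  piece : ℤ → Submodule ℂ V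
  isInternal : DirectSum.IsInternal piece
  lie_L_mem : ∀ (α : ℤ) (i : ℕ) (k : ℤ) (v : V), v ∈ piece k → ⁅𝔟.L α i, v⁆ ∈ piece (α + k)
  lie_C_mem : ∀ (k : ℤ) (v : V), v ∈ piece k → ⁅𝔟.C, v⁆ ∈ piece k

/-- A Lie submodule is graded if it is the (direct) sum of its intersections with the
graded pieces. -/
def GradedBMod.IsGradedSubmodule {𝔟 : BlockData B} (gr : GradedBMod 𝔟 V)
    (W : LieSubmodule ℂ B V) : Prop :=
  (W : Submodule ℂ V) = ⨆ k : ℤ, (W : Submodule ℂ V) ⊓ gr.piece k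

/-- A graded module is (graded-)irreducible if it is nonzero and has no graded submodule
other than `0` and `V`. -/
def GradedBMod.Irreducible {𝔟 : BlockData B} (gr : GradedBMod 𝔟 V) : Prop :=
  (∃ v : V, v ≠ 0) ∧
    ∀ W : LieSubmodule ℂ B V, gr.IsGradedSubmodule W → W = ⊥ ∨ W = ⊤

/-- Quasifinite: all graded pieces are finite dimensional. -/
def GradedBMod.Quasifinite {𝔟 : BlockData B} (gr : GradedBMod 𝔟 V) : Prop :=
  ∀ k : ℤ, FiniteDimensional ℂ (gr.piece k)

/-- Uniformly bounded: the dimensions of the graded pieces are uniformly bounded. -/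
def GradedBMod.UniformlyBounded {𝔟 : BlockData B} (gr : GradedBMod 𝔟 V) : Prop :=
  ∃ N : ℕ, ∀ k : ℤ, Module.rank ℂ (gr.piece k) ≤ N

/-- A module of the intermediate series: all graded pieces have dimension at most one. -/
def GradedBMod.IntermediateSeries {𝔟 : BlockData B} (gr : GradedBMod 𝔟 V) : Prop :=
  ∀ k : ℤ, Module.rank ℂ (gr.piece k) ≤ 1

/-- Highest weight module: generated by a nonzero `v ∈ V₀` which is a common eigenvector of
all `L 0 i` and of `C` and is annihilated by all `L α i` with `α > 0`. -/
def GradedBMod.IsHighestWeight {𝔟 : BlockData B} (gr : GradedBMod 𝔟 V) : Prop :=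
  ∃ v : V, v ≠ 0 ∧ v ∈ gr.piece 0 ∧
    (∀ i : ℕ, ∃ c : ℂ, ⁅𝔟.L 0 i, v⁆ = c • v) ∧ (∃ c : ℂ, ⁅𝔟.C, v⁆ = c • v) ∧
    (∀ α : ℤ, 0 < α → ∀ i : ℕ, ⁅𝔟.L α i, v⁆ = 0) ∧
    LieSubmodule.lieSpan ℂ B {v} = ⊤

/-- Lowest weight module. -/
def GradedBMod.IsLowestWeight {𝔟 : BlockData B} (gr : GradedBMod 𝔟 V) : Prop :=
  ∃ v : V, v ≠ 0 ∧ v ∈ gr.piece 0 ∧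
    (∀ i : ℕ, ∃ c : ℂ, ⁅𝔟.L 0 i, v⁆ = c • v) ∧ (∃ c : ℂ, ⁅𝔟.C, v⁆ = c • v) ∧
    (∀ α : ℤ, α < 0 → ∀ i : ℕ, ⁅𝔟.L α i, v⁆ = 0) ∧
    LieSubmodule.lieSpan ℂ B {v} = ⊤

/-- The subspace `𝔅_[m] = span{L(α,i) : α ∈ ℤ, i ≥ m}` of `𝔅`. -/
def BlockData.filt (𝔟 : BlockData B) (m : ℕ) : Submodule ℂ B :=
  Submodule.span ℂ {x : B | ∃ (α : ℤ) (i : ℕ), m ≤ i ∧ x = 𝔟.L α i}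

section AuxProof

open Polynomial

noncomputable def Aop (𝔟 : BlockData B) (α : ℤ) (i : ℕ) : Module.End ℂ V :=
  LieModule.toEnd ℂ B V (𝔟.L α i)

lemma Aop_apply (𝔟 : BlockData B) (α : ℤ) (i : ℕ) (v : V) :
    Aop 𝔟 α i v = ⁅𝔟.L α i, v⁆ := rfl

lemma Aop_comm (𝔟 : BlockData B) (α β : ℤ) (i j : ℕ) (h : ¬(α + β = 0 ∧ i + j = 0)) :
    Aop (V := V) 𝔟 α i * Aop 𝔟 β j - Aop 𝔟 β j * Aop 𝔟 α i
      = (((i : ℂ) + 1) * (β : ℂ) - ((j : ℂ) + 1) * (α : ℂ)) • Aop 𝔟 (α + β) (i + j) := by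
  letI : LieRing (Module.End ℂ V) := LieRing.ofAssociativeRing
  have h1 : ⁅Aop (V := V) 𝔟 α i, Aop (V := V) 𝔟 β j⁆
      = (((i : ℂ) + 1) * (β : ℂ) - ((j : ℂ) + 1) * (α : ℂ)) • Aop 𝔟 (α + β) (i + j) := by
    unfold Aop
    rw [← LieHom.map_lie, 𝔟.bracket_L, if_neg h]
    simp
  rw [← h1, Ring.lie_def]

noncomputable def Ehat (𝔟 : BlockData B) (α : ℤ) : ℂ[X] →ₗ[ℂ] Module.End ℂ V where
  toFun f := f.sum fun n c => c • Aop 𝔟 α n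
  map_add' p q := Polynomial.sum_add_index p q _ (fun i => zero_smul ℂ _)
    (fun a b₁ b₂ => add_smul b₁ b₂ _)
  map_smul' c f := by
    rw [Polynomial.sum_smul_index f c (fun n a => a • Aop (V := V) 𝔟 α n)
      (fun i => zero_smul ℂ _), RingHom.id_apply, Polynomial.smul_sum]
    simp only [mul_smul]

lemma Ehat_monomial (𝔟 : BlockData B) (α : ℤ) (n : ℕ) (c : ℂ) :
    Ehat (V := V) 𝔟 α (monomial n c) = c • Aop 𝔟 α n := by
  show (monomial n c).sum (fun n c => c • Aop (V := V) 𝔟 α n) = c • Aop 𝔟 α n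
  exact Polynomial.sum_monomial_index c _ (zero_smul ℂ _)

lemma Ehat_X_pow (𝔟 : BlockData B) (α : ℤ) (n : ℕ) :
    Ehat (V := V) 𝔟 α (X ^ n) = Aop 𝔟 α n := by
  rw [X_pow_eq_monomial, Ehat_monomial, one_smul]

lemma Ehat_X_mul (𝔟 : BlockData B) {α : ℤ} (hα : α ≠ 0) (f : ℂ[X]) :
    (2 * (α : ℂ)) • Ehat (V := V) 𝔟 α (X * f)
      = Aop 𝔟 0 1 * Ehat 𝔟 α f - Ehat 𝔟 α f * Aop 𝔟 0 1 := by
  induction f using Polynomial.induction_on' with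
  | add p q hp hq =>
      rw [mul_add, map_add, smul_add, hp, hq, map_add, mul_add, add_mul]
      abel
  | monomial n a =>
      rw [X_mul_monomial, Ehat_monomial, Ehat_monomial]
      have hc := Aop_comm (V := V) 𝔟 0 α 1 n (by simp [hα])
      rw [zero_add, Nat.add_comm 1 n] at hc
      rw [mul_smul_comm, smul_mul_assoc, ← smul_sub, hc, smul_smul, smul_smul]
      congr 1
      push_cast
      ring

lemma kills_X_mul {𝔟 : BlockData B} (gr : GradedBMod 𝔟 V) {α : ℤ} (hα : α ≠ 0) {k : ℤ}
    {f : ℂ[X]} (hf : ∀ v ∈ gr.piece k, Ehat 𝔟 α f v = 0) :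
    ∀ v ∈ gr.piece k, Ehat 𝔟 α (X * f) v = 0 := by
  intro v hv
  have h2 : (2 * (α : ℂ)) ≠ 0 := by
    simp only [ne_eq, mul_eq_zero, OfNat.ofNat_ne_zero, Int.cast_eq_zero, false_or]
    exact hα
  have hTv : Aop 𝔟 0 1 v ∈ gr.piece k := by
    have := gr.lie_L_mem 0 1 k v hv
    rwa [zero_add, ← Aop_apply] at this
  have h3 := congrArg (fun (F : Module.End ℂ V) => F v) (Ehat_X_mul 𝔟 hα f)
  simp only [LinearMap.smul_apply, LinearMap.sub_apply, Module.End.mul_apply] at h3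
  rw [hf v hv, hf _ hTv, map_zero, sub_zero] at h3
  exact (smul_eq_zero.mp h3).resolve_left h2

lemma kills_mul {𝔟 : BlockData B} (gr : GradedBMod 𝔟 V) {α : ℤ} (hα : α ≠ 0) {k : ℤ}
    (c : ℂ[X]) {f : ℂ[X]} (hf : ∀ v ∈ gr.piece k, Ehat 𝔟 α f v = 0) :
    ∀ v ∈ gr.piece k, Ehat 𝔟 α (c * f) v = 0 := by
  induction c using Polynomial.induction_on with
  | C a =>
      intro v hv
      rw [← Polynomial.smul_eq_C_mul, map_smul]
      simp [hf v hv]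
  | add p q hp hq =>
      intro v hv
      rw [add_mul, map_add]
      simp [hp v hv, hq v hv]
  | monomial n a hrec =>
      have : Polynomial.C a * X ^ (n + 1) * f = X * (Polynomial.C a * X ^ n * f) := by ring
      rw [this]
      exact kills_X_mul gr hα hrec

noncomputable def Kid {𝔟 : BlockData B} (gr : GradedBMod 𝔟 V) {α : ℤ} (hα : α ≠ 0)
    (k : ℤ) : Ideal ℂ[X] where
  carrier := {f | ∀ v ∈ gr.piece k, Ehat 𝔟 α f v = 0}
  zero_mem' := by intro v _; simp
  add_mem' := by
    intro p q hp hq v hv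
    rw [map_add]
    simp [hp v hv, hq v hv]
  smul_mem' := by
    intro c f hf
    simpa only [smul_eq_mul, Set.mem_setOf_eq] using kills_mul gr hα c hf

lemma mem_Kid {𝔟 : BlockData B} {gr : GradedBMod 𝔟 V} {α : ℤ} {hα : α ≠ 0} {k : ℤ}
    {f : ℂ[X]} : f ∈ Kid gr hα k ↔ ∀ v ∈ gr.piece k, Ehat 𝔟 α f v = 0 := Iff.rfl

lemma exists_small {𝔟 : BlockData B} (gr : GradedBMod 𝔟 V) (N : ℕ)
    (hN : ∀ k : ℤ, Module.rank ℂ (gr.piece k) ≤ N) (α : ℤ) (k : ℤ) :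
    ∃ f : ℂ[X], f ≠ 0 ∧ f.natDegree ≤ N * N ∧ ∀ v ∈ gr.piece k, Ehat 𝔟 α f v = 0 := by
  haveI fd1 : Module.Finite ℂ (gr.piece k) :=
    Module.rank_lt_aleph0_iff.mp ((hN k).trans_lt (Cardinal.nat_lt_aleph0 N))
  haveI fd2 : Module.Finite ℂ (gr.piece (α + k)) :=
    Module.rank_lt_aleph0_iff.mp ((hN (α + k)).trans_lt (Cardinal.nat_lt_aleph0 N))
  have hfr : ∀ m : ℤ, Module.finrank ℂ (gr.piece m) ≤ N :=
    fun m => Module.finrank_le_of_rank_le (hN m)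
  set φ : Fin (N * N + 1) → (gr.piece k →ₗ[ℂ] gr.piece (α + k)) := fun i =>
    (Aop 𝔟 α (i : ℕ)).restrict (fun v hv => by
      have := gr.lie_L_mem α (i : ℕ) k v hv
      rwa [← Aop_apply] at this) with hφ
  have hnli : ¬ LinearIndependent ℂ φ := by
    intro h
    have h1 := h.fintype_card_le_finrank
    rw [Module.finrank_linearMap, Fintype.card_fin] at h1
    have h2 : Module.finrank ℂ (gr.piece k) * Module.finrank ℂ (gr.piece (α + k)) ≤ N * N :=
      Nat.mul_le_mul (hfr k) (hfr (α + k))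
    omega
  obtain ⟨g, hg0, i0, hgi0⟩ := Fintype.not_linearIndependent_iff.mp hnli
  refine ⟨∑ i : Fin (N * N + 1), monomial (i : ℕ) (g i), ?_, ?_, ?_⟩
  · intro hzero
    apply hgi0
    have := congrArg (fun p : ℂ[X] => p.coeff (i0 : ℕ)) hzero
    simp only [Polynomial.finset_sum_coeff, Polynomial.coeff_monomial, Polynomial.coeff_zero] at this
    rwa [Finset.sum_eq_single i0 (fun b _ hb => if_neg (fun hc => hb (Fin.ext hc)))
      (fun hb => absurd (Finset.mem_univ i0) hb), if_pos rfl] at this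
  · exact Polynomial.natDegree_sum_le_of_forall_le _ _ (fun i _ =>
      (Polynomial.natDegree_monomial_le _).trans (by omega))
  · intro v hv
    rw [map_sum]
    have h3 : ((((∑ i, g i • φ i)) ⟨v, hv⟩ : gr.piece (α + k)) : V) = 0 := by
      rw [hg0]; rfl
    simp only [LinearMap.sum_apply, LinearMap.smul_apply, AddSubmonoidClass.coe_finset_sum,
      SetLike.val_smul, hφ, LinearMap.restrict_coe_apply] at h3
    simp only [Ehat_monomial, LinearMap.sum_apply, LinearMap.smul_apply]
    exact h3

lemma bracket_D (𝔟 : BlockData B) (β α : ℤ) (h : β + α ≠ 0) (f : ℂ[X]) :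
    Aop (V := V) 𝔟 β 0 * Ehat 𝔟 α f - Ehat 𝔟 α f * Aop 𝔟 β 0
      = Ehat 𝔟 (β + α) ((α : ℂ) • f - (β : ℂ) • derivative (X * f)) := by
  induction f using Polynomial.induction_on' with
  | add p q hp hq =>
      rw [map_add, mul_add, add_mul, mul_add, map_add, smul_add, smul_add]
      have hre : (α : ℂ) • p + (α : ℂ) • q
            - ((β : ℂ) • derivative (X * p) + (β : ℂ) • derivative (X * q))
          = ((α : ℂ) • p - (β : ℂ) • derivative (X * p))
            + ((α : ℂ) • q - (β : ℂ) • derivative (X * q)) := by abel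
      rw [hre, map_add, ← hp, ← hq]
      abel
  | monomial n a =>
      have hc := Aop_comm (V := V) 𝔟 β α 0 n (by simp [h])
      rw [Nat.zero_add] at hc
      rw [Ehat_monomial, mul_smul_comm, smul_mul_assoc, ← smul_sub, hc, smul_smul]
      rw [X_mul_monomial, Polynomial.derivative_monomial, Polynomial.smul_monomial,
        Polynomial.smul_monomial, Nat.add_sub_cancel, ← map_sub, Ehat_monomial]
      congr 1
      simp only [smul_eq_mul]
      push_cast
      ring

lemma D_mem {𝔟 : BlockData B} (gr : GradedBMod 𝔟 V) {α β γ k : ℤ} (hα : α ≠ 0) (hγ : γ ≠ 0)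
    (hsum : β + α = γ) {f : ℂ[X]} (h1 : f ∈ Kid gr hα k) (h2 : f ∈ Kid gr hα (β + k)) :
    ((α : ℂ) • f - (β : ℂ) • derivative (X * f)) ∈ Kid gr hγ k := by
  subst hsum
  intro v hv
  have hb := congrArg (fun (F : Module.End ℂ V) => F v) (bracket_D 𝔟 β α hγ f)
  simp only [LinearMap.sub_apply, Module.End.mul_apply] at hb
  rw [h1 v hv, map_zero] at hb
  have hBv : Aop 𝔟 β 0 v ∈ gr.piece (β + k) := by
    have := gr.lie_L_mem β 0 k v hv
    rwa [← Aop_apply] at this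
  rw [h2 _ hBv] at hb
  simpa using hb.symm

lemma Dpoly_identity (α β : ℤ) (q : ℂ[X]) :
    X * ((α : ℂ) • q - (β : ℂ) • derivative (X * q))
        - ((α : ℂ) • (X * q) - (β : ℂ) • derivative (X * (X * q)))
      = (β : ℂ) • (X * q) := by
  simp only [Polynomial.smul_eq_C_mul, Polynomial.derivative_mul, Polynomial.derivative_X,
    Polynomial.derivative_C]
  ring

lemma descent {𝔟 : BlockData B} (gr : GradedBMod 𝔟 V) (N : ℕ)
    (hN : ∀ k : ℤ, Module.rank ℂ (gr.piece k) ≤ N) {μ : ℂ} (hμ : μ ≠ 0) (e : ℕ) (he : 1 ≤ e)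
    (hQ : ∃ (γ : ℤ) (hγ : γ ≠ 0) (k : ℤ), Kid gr hγ k ≤ Ideal.span {(X - Polynomial.C μ) ^ e}) :
    ∃ (γ : ℤ) (hγ : γ ≠ 0) (k : ℤ),
      Kid gr hγ k ≤ Ideal.span {(X - Polynomial.C μ) ^ (e + 1)} := by
  obtain ⟨γ, hγ, k, hK⟩ := hQ
  set α : ℤ := -γ with hαdef
  set β : ℤ := 2 * γ with hβdef
  have hα : α ≠ 0 := neg_ne_zero.mpr hγ
  have hβ : (β : ℂ) ≠ 0 := by
    simp only [hβdef]
    push_cast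
    simp [hγ]
  have hsum : β + α = γ := by omega
  -- generators
  obtain ⟨p₁, hp₁⟩ := (IsPrincipalIdealRing.principal (Kid gr hα k)).principal
  obtain ⟨p₂, hp₂⟩ := (IsPrincipalIdealRing.principal (Kid gr hα (β + k))).principal
  obtain ⟨f₁, hf₁0, hf₁d, hf₁K⟩ := exists_small gr N hN α k
  obtain ⟨f₂, hf₂0, hf₂d, hf₂K⟩ := exists_small gr N hN α (β + k)
  have hp₁0 : p₁ ≠ 0 := by
    rintro rfl
    refine hf₁0 ?_
    have : f₁ ∈ Kid gr hα k := hf₁K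
    rw [hp₁, Submodule.span_zero_singleton ℂ[X]] at this
    simpa using this
  have hp₂0 : p₂ ≠ 0 := by
    rintro rfl
    refine hf₂0 ?_
    have : f₂ ∈ Kid gr hα (β + k) := hf₂K
    rw [hp₂, Submodule.span_zero_singleton ℂ[X]] at this
    simpa using this
  set e₁ := Polynomial.rootMultiplicity μ p₁ with he₁
  set e₂ := Polynomial.rootMultiplicity μ p₂ with he₂
  set m := min e₁ e₂ with hm
  obtain ⟨s, hs⟩ : (X - Polynomial.C μ) ^ m ∣ p₁ :=
    dvd_trans (pow_dvd_pow _ (min_le_left _ _)) (Polynomial.pow_rootMultiplicity_dvd p₁ μ)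
  obtain ⟨r, hr⟩ : (X - Polynomial.C μ) ^ m ∣ p₂ :=
    dvd_trans (pow_dvd_pow _ (min_le_right _ _)) (Polynomial.pow_rootMultiplicity_dvd p₂ μ)
  have hr0 : r ≠ 0 := by rintro rfl; exact hp₂0 (by rw [hr, mul_zero])
  set q := p₁ * r with hqdef
  have hq0 : q ≠ 0 := mul_ne_zero hp₁0 hr0
  have hq₁ : q ∈ Kid gr hα k := by
    rw [hp₁]; exact Ideal.mem_span_singleton.mpr ⟨r, rfl⟩
  have hq₂ : q ∈ Kid gr hα (β + k) := by
    rw [hp₂]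
    exact Ideal.mem_span_singleton.mpr ⟨s, by rw [hqdef, hs, hr]; ring⟩
  have hXq₁ : X * q ∈ Kid gr hα k := Ideal.mul_mem_left _ X hq₁
  have hXq₂ : X * q ∈ Kid gr hα (β + k) := Ideal.mul_mem_left _ X hq₂
  have hDq : ((α : ℂ) • q - (β : ℂ) • derivative (X * q)) ∈ Kid gr hγ k :=
    D_mem gr hα hγ hsum hq₁ hq₂
  have hDXq : ((α : ℂ) • (X * q) - (β : ℂ) • derivative (X * (X * q))) ∈ Kid gr hγ k :=
    D_mem gr hα hγ hsum hXq₁ hXq₂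
  set E := Ideal.span {(X - Polynomial.C μ) ^ e} with hE
  have h₁ : ((α : ℂ) • q - (β : ℂ) • derivative (X * q)) ∈ E := hK hDq
  have h₂ : ((α : ℂ) • (X * q) - (β : ℂ) • derivative (X * (X * q))) ∈ E := hK hDXq
  have hXqE : X * q ∈ E := by
    have hb : (β : ℂ) • (X * q) ∈ E := by
      rw [← Dpoly_identity α β q]
      exact E.sub_mem (Ideal.mul_mem_left _ X h₁) h₂
    have hmem := E.smul_of_tower_mem ((β : ℂ)⁻¹) hb
    rwa [smul_smul, inv_mul_cancel₀ hβ, one_smul] at hmem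
  have hXq0 : X * q ≠ 0 := mul_ne_zero Polynomial.X_ne_zero hq0
  have hdvdXq : (X - Polynomial.C μ) ^ e ∣ X * q := Ideal.mem_span_singleton.mp hXqE
  set t := Polynomial.rootMultiplicity μ q with ht
  have htXq : Polynomial.rootMultiplicity μ (X * q) = t := by
    rw [Polynomial.rootMultiplicity_mul hXq0,
      Polynomial.rootMultiplicity_eq_zero (by
        intro hroot
        exact hμ (by simpa using hroot)), zero_add]
  have hte : e ≤ t := by
    rw [← htXq]
    exact (Polynomial.le_rootMultiplicity_iff hXq0).mpr hdvdXq
  have ht1 : e + 1 ≤ t := by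
    by_contra hlt
    have hteq : t = e := le_antisymm (by omega) hte
    have hdq : (X - Polynomial.C μ) ^ e ∣ ((α : ℂ) • q - (β : ℂ) • derivative (X * q)) :=
      Ideal.mem_span_singleton.mp h₁
    have hdq1 : (X - Polynomial.C μ) ^ e ∣ (α : ℂ) • q := by
      rw [Polynomial.smul_eq_C_mul]
      refine Dvd.dvd.mul_left ?_ _
      rw [← hteq]
      exact Polynomial.pow_rootMultiplicity_dvd q μ
    have hdq2 : (X - Polynomial.C μ) ^ e ∣ (β : ℂ) • derivative (X * q) :=
      (sub_sub_cancel ((α : ℂ) • q) ((β : ℂ) • derivative (X * q))) ▸ dvd_sub hdq1 hdq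
    have hd3 : (X - Polynomial.C μ) ^ e ∣ derivative (X * q) := by
      rw [Polynomial.smul_eq_C_mul] at hdq2
      exact (IsUnit.dvd_mul_left (Polynomial.isUnit_C.mpr (isUnit_iff_ne_zero.mpr hβ))).mp hdq2
    have hroot : (X * q).IsRoot μ :=
      Polynomial.dvd_iff_isRoot.mp (dvd_trans (dvd_pow_self _ (by omega : e ≠ 0)) hdvdXq)
    have hder0 : derivative (X * q) ≠ 0 := by
      intro h0
      have hnd := Polynomial.natDegree_eq_zero_of_derivative_eq_zero h0
      rw [Polynomial.natDegree_mul Polynomial.X_ne_zero hq0, Polynomial.natDegree_X] at hnd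
      omega
    have hdermult := Polynomial.derivative_rootMultiplicity_of_root hroot
    have he' : e ≤ Polynomial.rootMultiplicity μ (derivative (X * q)) :=
      (Polynomial.le_rootMultiplicity_iff hder0).mpr hd3
    rw [hdermult, htXq, hteq] at he'
    omega
  have htval : t = e₁ + Polynomial.rootMultiplicity μ r := by
    rw [ht, hqdef, Polynomial.rootMultiplicity_mul hq0]
  have hrmult : e₂ = m + Polynomial.rootMultiplicity μ r := by
    rw [he₂, hr, Polynomial.rootMultiplicity_mul (hr ▸ hp₂0),
      Polynomial.rootMultiplicity_X_sub_C_pow]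
  rcases le_total e₁ e₂ with hle | hle
  · have hmm : m = e₁ := min_eq_left hle
    have : e + 1 ≤ e₂ := by omega
    refine ⟨α, hα, β + k, ?_⟩
    intro f hf
    rw [hp₂] at hf
    have hdf : p₂ ∣ f := Ideal.mem_span_singleton.mp hf
    refine Ideal.mem_span_singleton.mpr (dvd_trans ?_ hdf)
    exact (Polynomial.le_rootMultiplicity_iff hp₂0).mp this
  · have hmm : m = e₂ := min_eq_right hle
    have : e + 1 ≤ e₁ := by omega
    refine ⟨α, hα, k, ?_⟩
    intro f hf
    rw [hp₁] at hf
    have hdf : p₁ ∣ f := Ideal.mem_span_singleton.mp hf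
    refine Ideal.mem_span_singleton.mpr (dvd_trans ?_ hdf)
    exact (Polynomial.le_rootMultiplicity_iff hp₁0).mp this

lemma Kid_not_le_span {𝔟 : BlockData B} (gr : GradedBMod 𝔟 V) (N : ℕ)
    (hN : ∀ k : ℤ, Module.rank ℂ (gr.piece k) ≤ N) {μ : ℂ} (hμ : μ ≠ 0) {α : ℤ}
    (hα : α ≠ 0) (k : ℤ) :
    ¬ (Kid gr hα k ≤ Ideal.span {X - Polynomial.C μ}) := by
  intro h0
  have H : ∀ e : ℕ, 1 ≤ e → ∃ (γ : ℤ) (hγ : γ ≠ 0) (k' : ℤ),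
      Kid gr hγ k' ≤ Ideal.span {(X - Polynomial.C μ) ^ e} := by
    intro e he
    induction e with
    | zero => omega
    | succ n ih =>
        rcases Nat.eq_or_lt_of_le he with he1 | he2
        · exact ⟨α, hα, k, by rw [← he1, pow_one]; exact h0⟩
        · exact descent gr N hN hμ n (by omega) (ih (by omega))
  obtain ⟨γ, hγ, k', hle⟩ := H (N * N + 1) (by omega)
  obtain ⟨f, hf0, hfd, hfK⟩ := exists_small gr N hN γ k'
  have hdvd : (X - Polynomial.C μ) ^ (N * N + 1) ∣ f := Ideal.mem_span_singleton.mp (hle hfK)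
  have hdeg := Polynomial.natDegree_le_of_dvd hdvd hf0
  rw [Polynomial.natDegree_pow, Polynomial.natDegree_X_sub_C, mul_one] at hdeg
  omega

lemma dvd_X_pow_aux : ∀ (n : ℕ) (p : ℂ[X]), p.natDegree = n → p ≠ 0 →
    (∀ μ : ℂ, p.IsRoot μ → μ = 0) → p ∣ X ^ n := by
  intro n
  induction n using Nat.strong_induction_on with
  | _ n ih =>
    intro p hdeg hp0 hroots
    by_cases h0 : n = 0
    · subst h0
      obtain ⟨a, rfl⟩ := Polynomial.natDegree_eq_zero.mp hdeg
      have ha : a ≠ 0 := fun h => hp0 (by rw [h, map_zero])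
      exact (Polynomial.isUnit_C.mpr (isUnit_iff_ne_zero.mpr ha)).dvd
    · have hdegpos : 0 < p.degree :=
        Polynomial.natDegree_pos_iff_degree_pos.mp (by omega)
      obtain ⟨z, hz⟩ := Complex.exists_root hdegpos
      have hz0 : z = 0 := hroots z hz
      subst hz0
      have hXdvd : X ∣ p := by
        have := Polynomial.dvd_iff_isRoot.mpr hz
        simpa using this
      obtain ⟨p₁, hp₁⟩ := hXdvd
      have hp₁0 : p₁ ≠ 0 := fun h => hp0 (by rw [hp₁, h, mul_zero])
      have hdeg1 : p₁.natDegree = n - 1 := by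
        have := hdeg
        rw [hp₁, Polynomial.natDegree_mul Polynomial.X_ne_zero hp₁0,
          Polynomial.natDegree_X] at this
        omega
      have hroots1 : ∀ μ : ℂ, p₁.IsRoot μ → μ = 0 := by
        intro μ hμ
        refine hroots μ ?_
        rw [hp₁]
        exact Polynomial.IsRoot.dvd hμ ⟨X, mul_comm _ _⟩
      have := ih (n - 1) (by omega) p₁ hdeg1 hp₁0 hroots1
      calc p = X * p₁ := hp₁
        _ ∣ X * X ^ (n - 1) := mul_dvd_mul_left X this
        _ = X ^ n := by rw [← pow_succ']; congr 1; omega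

lemma Aop_zero {𝔟 : BlockData B} (gr : GradedBMod 𝔟 V) (N : ℕ)
    (hN : ∀ k : ℤ, Module.rank ℂ (gr.piece k) ≤ N) {α : ℤ} (hα : α ≠ 0) {i : ℕ}
    (hi : N * N ≤ i) {k : ℤ} {v : V} (hv : v ∈ gr.piece k) : Aop 𝔟 α i v = 0 := by
  obtain ⟨p, hp⟩ := (IsPrincipalIdealRing.principal (Kid gr hα k)).principal
  obtain ⟨f, hf0, hfd, hfK⟩ := exists_small gr N hN α k
  have hfmem : f ∈ Kid gr hα k := hfK
  rw [hp] at hfmem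
  have hpf : p ∣ f := Ideal.mem_span_singleton.mp hfmem
  have hp0 : p ≠ 0 := by
    rintro rfl
    exact hf0 (zero_dvd_iff.mp hpf)
  have hpdeg : p.natDegree ≤ N * N := le_trans (Polynomial.natDegree_le_of_dvd hpf hf0) hfd
  have hroots : ∀ μ : ℂ, p.IsRoot μ → μ = 0 := by
    intro μ hμroot
    by_contra hμ0
    refine Kid_not_le_span gr N hN hμ0 hα k ?_
    rw [hp]
    refine Ideal.span_singleton_le_span_singleton.mpr ?_
    exact Polynomial.dvd_iff_isRoot.mpr hμroot
  have hdvd : p ∣ X ^ i := dvd_trans (dvd_X_pow_aux p.natDegree p rfl hp0 hroots)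
    (pow_dvd_pow X (le_trans hpdeg hi))
  have hXi : (X ^ i : ℂ[X]) ∈ Kid gr hα k := by
    rw [hp]
    exact Ideal.mem_span_singleton.mpr hdvd
  have := hXi v hv
  rwa [Ehat_X_pow] at this

end AuxProof

/-- Let `V` be an irreducible uniformly bounded ℤ-graded `𝔅`-module. Then
there exists `j ≥ 0` such that `𝔅_[j+1]·V = 0`, where `𝔅_[m] = span{L(α,i) : α ∈ ℤ, i ≥ m}`. -/
theorem block_filtration_acts_trivially_eventually
    (𝔟 : BlockData B) (gr : GradedBMod 𝔟 V)
    (hirr : gr.Irreducible) (hub : gr.UniformlyBounded) :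
    ∃ j : ℕ, ∀ x ∈ 𝔟.filt (j + 1), ∀ v : V, ⁅x, v⁆ = 0 := by
  obtain ⟨N, hN⟩ := (hub : ∃ N : ℕ, ∀ k : ℤ, Module.rank ℂ (gr.piece k) ≤ N)
  refine ⟨2 * (N * N), ?_⟩
  have hbasis : ∀ (α : ℤ) (i : ℕ), 2 * (N * N) + 1 ≤ i → ∀ v : V, ⁅𝔟.L α i, v⁆ = 0 := by
    intro α i hi v
    have hv : v ∈ ⨆ k : ℤ, gr.piece k := by
      rw [gr.isInternal.submodule_iSup_eq_top]; trivial
    refine Submodule.iSup_induction (motive := fun u => ⁅𝔟.L α i, u⁆ = 0) _ hv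
      (fun k w hw => ?_) (lie_zero _)
      (fun x y hx hy => by
        have hx' : ⁅𝔟.L α i, x⁆ = 0 := hx
        have hy' : ⁅𝔟.L α i, y⁆ = 0 := hy
        show ⁅𝔟.L α i, x + y⁆ = 0
        rw [lie_add, hx', hy', add_zero])
    by_cases hα : α = 0
    · subst hα
      set a := N * N with ha
      set b := i - N * N with hb
      have hab : a + b = i := by omega
      have hcomm := Aop_comm (V := V) 𝔟 1 (-1) a b (by rintro ⟨h1, h2⟩; omega)
      have happ := congrArg (fun F : Module.End ℂ V => F w) hcomm
      simp only [LinearMap.sub_apply, Module.End.mul_apply, LinearMap.smul_apply] at happ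
      have hz1 : Aop 𝔟 (-1) b w = 0 := Aop_zero gr N hN (by norm_num) (by omega) hw
      have hz2 : Aop 𝔟 1 a w = 0 := Aop_zero gr N hN (by norm_num) (by omega) hw
      rw [hz1, hz2, map_zero, map_zero, sub_zero] at happ
      have hcval : (((a : ℕ) : ℂ) + 1) * ((-1 : ℤ) : ℂ) - (((b : ℕ) : ℂ) + 1) * ((1 : ℤ) : ℂ)
          = -(((a + b : ℕ) : ℂ) + 2) := by push_cast; ring
      rw [hcval] at happ
      have hc0 : -(((a + b : ℕ) : ℂ) + 2) ≠ 0 := by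
        simp only [ne_eq, neg_eq_zero]
        intro h
        have h' : ((a + b + 2 : ℕ) : ℂ) = 0 := by push_cast at h ⊢; linear_combination h
        have := Nat.cast_eq_zero.mp h'
        omega
      have hz : Aop 𝔟 (1 + -1) (a + b) w = 0 := by
        have := happ.symm
        rcases smul_eq_zero.mp this with hc | hz
        · exact absurd hc hc0
        · exact hz
      have h10 : (1 + -1 : ℤ) = 0 := by norm_num
      rw [h10, hab] at hz
      rw [← Aop_apply]
      exact hz
    · have := Aop_zero gr N hN hα (show N * N ≤ i by omega) hw
      rwa [Aop_apply] at this
  intro x hx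
  induction hx using Submodule.span_induction with
  | mem y hy =>
      obtain ⟨α, i, hi, rfl⟩ := hy
      exact fun v => hbasis α i hi v
  | zero => exact fun v => zero_lie v
  | add y z _ _ hy hz => exact fun v => by rw [add_lie, hy v, hz v, add_zero]
  | smul c y _ hy => exact fun v => by rw [smul_lie, hy v, smul_zero]
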